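/- For the beta-splitting model with parameter β > -2, the rate sequence λ_n = λ_2 Π_{j=2}^{n-1} 1/(1 - p(j,1)) satisfies λ_n = λ_2 Z(n) Γ(4+2β)/Γ(n+2+2β), where p(i,j) = w(i)w(j)/Z(i+j), w(j) = Γ(j+1+β)/Γ(2+β), and Z(n) = Σ_{k=1}^{n-1} C(n-1,k-1) w(k)w(n-k). -/

import Mathlib

open Finset

/-- for the beta-splitting model with parameter `β > -2`, the rate
sequence `λ_n = λ_2 ∏_{j=2}^{n-1} 1/(1 - p(j,1))` equals
`λ_2 Z(n) Γ(4+2β)/Γ(n+2+2β)`. -/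
theorem beta_splitting_rate_sequence
    (β : ℝ) (hβ : β > -2)
    (w : ℕ → ℝ)
    (hw : ∀ j : ℕ, 1 ≤ j → w j = Real.Gamma ((j : ℝ) + 1 + β) / Real.Gamma (2 + β))
    (Z : ℕ → ℝ)
    (hZ : ∀ n : ℕ, 2 ≤ n →
      Z n = ∑ k ∈ Finset.Icc 1 (n - 1), ((n - 1).choose (k - 1) : ℝ) * w k * w (n - k))
    (p : ℕ → ℕ → ℝ)
    (hp : ∀ i j : ℕ, 1 ≤ i → 1 ≤ j → p i j = w i * w j / Z (i + j))
    (lam : ℕ → ℝ)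
    (hlam : ∀ n : ℕ, 2 ≤ n →
      lam n = lam 2 * ∏ j ∈ Finset.Icc 2 (n - 1), 1 / (1 - p j 1)) :
    ∀ n : ℕ, 2 ≤ n →
      lam n = lam 2 * Z n * Real.Gamma (4 + 2 * β) / Real.Gamma ((n : ℝ) + 2 + 2 * β) := by
  -- positivity of Gamma at positive arguments
  have hG2 : (0:ℝ) < Real.Gamma (2 + β) := Real.Gamma_pos_of_pos (by linarith)
  have wpos : ∀ j : ℕ, 1 ≤ j → 0 < w j := by
    intro j hj
    rw [hw j hj]
    have : (1:ℝ) ≤ (j:ℝ) := by exact_mod_cast hj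
    exact div_pos (Real.Gamma_pos_of_pos (by linarith)) hG2
  have hw1 : w 1 = 1 := by
    rw [hw 1 le_rfl]
    norm_num
    exact ne_of_gt hG2
  have wrec : ∀ j : ℕ, 1 ≤ j → w (j + 1) = ((j:ℝ) + 1 + β) * w j := by
    intro j hj
    have h1 : (1:ℝ) ≤ (j:ℝ) := by exact_mod_cast hj
    rw [hw (j+1) (by omega), hw j hj]
    have hx : ((j:ℝ) + 1 + β) ≠ 0 := by linarith
    have : ((j+1 : ℕ) : ℝ) + 1 + β = ((j:ℝ) + 1 + β) + 1 := by push_cast; ring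
    rw [this, Real.Gamma_add_one hx]
    ring
  -- Z in range form
  have hZ' : ∀ m : ℕ, Z (m+2) = ∑ i ∈ range (m+1), (((m+1).choose i : ℕ) : ℝ) * w (i+1) * w (m+1-i) := by
    intro m
    rw [hZ (m+2) (by omega), show m+2-1 = (m+1) from rfl, ← Finset.Ico_add_one_right_eq_Icc,
      Finset.sum_Ico_eq_sum_range]
    have hrange : m + 1 + 1 - 1 = m + 1 := by omega
    rw [hrange]
    apply Finset.sum_congr rfl
    intro i hi
    have h2 : 1 + i - 1 = i := by omega
    have h3 : 1 + i = i + 1 := by omega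
    rw [h2, h3, show m + 2 - (i + 1) = m + 1 - i from by omega]
  -- key recurrence in range form
  have key : ∀ m : ℕ,
      (∑ i ∈ range (m+2), (((m+2).choose i : ℕ) : ℝ) * w (i+1) * w (m+2-i))
      = ((m:ℝ) + 4 + 2*β) * (∑ i ∈ range (m+1), (((m+1).choose i : ℕ) : ℝ) * w (i+1) * w (m+1-i))
        + w (m+2) := by
    intro m
    rw [Finset.sum_range_succ']
    -- bottom term is C(m+2,0) * w 1 * w (m+2)
    have hbot : (((m+2).choose 0 : ℕ) : ℝ) * w (0+1) * w (m+2-0) = w (m+2) := by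
      simp [hw1]
    rw [hbot]
    -- Pascal + wrec on each remaining term
    have hterm : ∀ i ∈ range (m+1),
        (((m+2).choose (i+1) : ℕ) : ℝ) * w (i+1+1) * w (m+2-(i+1))
        = (((m+1).choose i : ℕ) : ℝ) * (((i:ℝ)+2+β) * (w (i+1) * w (m+1-i)))
          + (((m+1).choose (i+1) : ℕ) : ℝ) * w (i+1+1) * w (m+2-(i+1)) := by
      intro i hi
      have h1 : m+2-(i+1) = m+1-i := by omega
      rw [h1, Nat.choose_succ_succ, wrec (i+1) (by omega)]
      push_cast
      ring
    rw [Finset.sum_congr rfl hterm, Finset.sum_add_distrib]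
    -- second sum: shift index
    have hB : (∑ i ∈ range (m+1), (((m+1).choose (i+1) : ℕ) : ℝ) * w (i+1+1) * w (m+2-(i+1)))
        = ∑ i ∈ range (m+1), (((m+1).choose i : ℕ) : ℝ) * (((m:ℝ)+2-(i:ℝ)+β) * (w (i+1) * w (m+1-i))) := by
      have e1 : (∑ j ∈ range (m+2), (((m+1).choose j : ℕ) : ℝ) * w (j+1) * w (m+2-j))
          = (∑ i ∈ range (m+1), (((m+1).choose (i+1) : ℕ) : ℝ) * w (i+1+1) * w (m+2-(i+1)))
            + (((m+1).choose 0 : ℕ) : ℝ) * w (0+1) * w (m+2-0) :=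
        Finset.sum_range_succ' _ _
      have e2 : (∑ j ∈ range (m+2), (((m+1).choose j : ℕ) : ℝ) * w (j+1) * w (m+2-j))
          = (∑ j ∈ range (m+1), (((m+1).choose j : ℕ) : ℝ) * w (j+1) * w (m+2-j))
            + (((m+1).choose (m+1) : ℕ) : ℝ) * w (m+1+1) * w (m+2-(m+1)) :=
        Finset.sum_range_succ _ _
      have e3 : (((m+1).choose 0 : ℕ) : ℝ) * w (0+1) * w (m+2-0) = w (m+2) := by simp [hw1]
      have e4 : (((m+1).choose (m+1) : ℕ) : ℝ) * w (m+1+1) * w (m+2-(m+1)) = w (m+2) := by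
        have : m+2-(m+1) = 1 := by omega
        simp [this, hw1]
      have e5 : (∑ i ∈ range (m+1), (((m+1).choose (i+1) : ℕ) : ℝ) * w (i+1+1) * w (m+2-(i+1)))
          = ∑ j ∈ range (m+1), (((m+1).choose j : ℕ) : ℝ) * w (j+1) * w (m+2-j) := by
        rw [e3] at e1; rw [e4] at e2; linarith [e1, e2]
      rw [e5]
      apply Finset.sum_congr rfl
      intro j hj
      have hj' : j ≤ m := by simpa [Nat.lt_succ_iff] using hj
      have h1 : m + 2 - j = (m + 1 - j) + 1 := by omega
      rw [h1, wrec (m+1-j) (by omega)]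
      rw [Nat.cast_sub (by omega : j ≤ m + 1)]
      push_cast
      ring
    rw [hB, ← Finset.sum_add_distrib, Finset.mul_sum]
    congr 1
    apply Finset.sum_congr rfl
    intro i hi
    ring

  -- Z is positive
  have Zpos : ∀ n : ℕ, 2 ≤ n → 0 < Z n := by
    intro n hn
    rw [hZ n hn]
    apply Finset.sum_pos
    · intro k hk
      obtain ⟨hk1, hk2⟩ := Finset.mem_Icc.mp hk
      have hc : 0 < (n-1).choose (k-1) := Nat.choose_pos (by omega)
      have : (0:ℝ) < ((n-1).choose (k-1) : ℝ) := by exact_mod_cast hc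
      exact mul_pos (mul_pos this (wpos k hk1)) (wpos (n-k) (by omega))
    · exact ⟨1, Finset.mem_Icc.mpr ⟨le_rfl, by omega⟩⟩
  -- the recurrence for Z
  have Zrec : ∀ n : ℕ, 2 ≤ n → Z (n+1) = ((n:ℝ) + 2 + 2*β) * Z n + w n := by
    intro n hn
    obtain ⟨m, rfl⟩ : ∃ m, n = m + 2 := ⟨n - 2, by omega⟩
    rw [show m + 2 + 1 = (m+1) + 2 from rfl, hZ' (m+1), hZ' m, key m]
    push_cast
    ring
  -- main induction
  intro n hn
  induction n, hn using Nat.le_induction with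
  | base =>
    have hZ2 : Z 2 = 1 := by
      rw [hZ 2 le_rfl]
      norm_num [hw1]
    rw [hlam 2 le_rfl, hZ2]
    rw [show ((2:ℕ):ℝ) + 2 + 2*β = 4 + 2*β from by push_cast; ring]
    have hG4 : Real.Gamma (4 + 2*β) ≠ 0 :=
      ne_of_gt (Real.Gamma_pos_of_pos (by linarith))
    simp
    field_simp
  | succ n hn ih =>
    have hGn : (0:ℝ) < Real.Gamma ((n:ℝ) + 2 + 2*β) := by
      apply Real.Gamma_pos_of_pos
      have : (2:ℝ) ≤ (n:ℝ) := by exact_mod_cast hn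
      linarith
    have hpos : (0:ℝ) < (n:ℝ) + 2 + 2*β := by
      have : (2:ℝ) ≤ (n:ℝ) := by exact_mod_cast hn
      linarith
    have hZn := Zpos n hn
    have hZn1 := Zpos (n+1) (by omega)
    -- step: lam (n+1) = lam n * (1 / (1 - p n 1))
    have hstep : lam (n+1) = lam n * (1 / (1 - p n 1)) := by
      obtain ⟨m, rfl⟩ : ∃ m, n = m + 2 := ⟨n - 2, by omega⟩
      rw [hlam (m+2+1) (by omega), hlam (m+2) (by omega)]
      rw [show m + 2 + 1 - 1 = (m+1) + 1 from rfl, show m + 2 - 1 = m + 1 from rfl]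
      rw [Finset.prod_Icc_succ_top (by omega : 2 ≤ m + 1 + 1)]
      ring
    -- compute 1 - p n 1
    have hpn : 1 - p n 1 = (((n:ℝ) + 2 + 2*β) * Z n) / Z (n+1) := by
      rw [hp n 1 (by omega) le_rfl, hw1, mul_one]
      rw [eq_div_iff (ne_of_gt hZn1), sub_mul, one_mul,
        div_mul_cancel₀ _ (ne_of_gt hZn1), Zrec n hn]
      ring
    have hG1 : Real.Gamma ((n:ℝ) + 1 + 2 + 2*β) = ((n:ℝ) + 2 + 2*β) * Real.Gamma ((n:ℝ) + 2 + 2*β) := by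
      rw [show (n:ℝ) + 1 + 2 + 2*β = ((n:ℝ) + 2 + 2*β) + 1 from by ring,
        Real.Gamma_add_one (ne_of_gt hpos)]
    rw [hstep, ih, hpn]
    rw [show ((n:ℕ)+1 : ℕ) = n+1 from rfl]
    push_cast
    rw [hG1]
    field_simp
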